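/- Let $d = 2k$ and suppose $\Delta \in \mathbb{Z}$ satisfies $\Delta \equiv \det A \pmod 8$, where $A = B + 4C + 4C^T$ with $C$ upper triangular over $\mathbb{Z}$ and $B$ a block diagonal sum of blocks $\begin{pmatrix} 4a_i & 1 \\ 1 & 1 + 4b_i \end{pmatrix}$ with $a_i, b_i \in \mathbb{Z}$. Then $\Delta \equiv \pm 1 \pmod 8$ if $\sum_{i=1}^k a_i$ is even, and $\Delta \equiv \pm 3 \pmod 8$ if $\sum_{i=1}^k a_i$ is odd. -/

import Mathlib

open Matrix

private lemma prod48 {ι : Type*} (s : Finset ι) (x : ι → ZMod 8) :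
    ∏ i ∈ s, (4 * x i - 1) = (-1) ^ s.card * (1 - 4 * ∑ i ∈ s, x i) := by
  classical
  induction s using Finset.induction with
  | empty => simp
  | @insert c s' h ih =>
    rw [Finset.prod_insert h, Finset.sum_insert h, ih, Finset.card_insert_of_notMem h]
    have h16 : (16 : ZMod 8) = 0 := by decide
    linear_combination (-(-1 : ZMod 8) ^ s'.card * x c * (∑ i ∈ s', x i)) * h16

/-- If `Δ ≡ det A mod 8` with `A = B + 4C + 4Cᵀ` and `B` block diagonal with
blocks `[[4aᵢ,1],[1,1+4bᵢ]]`, then `Δ ≡ ±1 mod 8` if `∑ aᵢ` is even and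
`Δ ≡ ±3 mod 8` if `∑ aᵢ` is odd. -/
theorem delta_mod_eight (k : ℕ) (a b : Fin k → ℤ) (Δ : ℤ)
    (B C A : Matrix (Fin (2 * k)) (Fin (2 * k)) ℤ)
    (hC : ∀ i j : Fin (2 * k), (j : ℕ) ≤ (i : ℕ) → C i j = 0)
    (hB : ∀ i j : Fin (2 * k), B i j =
      if i = j then
        (if (i : ℕ) % 2 = 0 then 4 * a ⟨(i : ℕ) / 2, by have := i.isLt; omega⟩
         else 1 + 4 * b ⟨(i : ℕ) / 2, by have := i.isLt; omega⟩)
      else if (i : ℕ) / 2 = (j : ℕ) / 2 then 1 else 0)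
    (hA : A = B + (4 : ℤ) • C + (4 : ℤ) • Cᵀ)
    (hΔ : Δ ≡ A.det [ZMOD 8]) :
    (Even (∑ i, a i) → (Δ ≡ 1 [ZMOD 8] ∨ Δ ≡ -1 [ZMOD 8])) ∧
    (Odd (∑ i, a i) → (Δ ≡ 3 [ZMOD 8] ∨ Δ ≡ -3 [ZMOD 8])) := by
  classical
  set R := ZMod 8
  set φ : ℤ →+* R := Int.castRingHom R with hφ
  set e : Fin 2 × Fin k ≃ Fin (2 * k) :=
    (Equiv.prodComm (Fin 2) (Fin k)).trans (finProdFinEquiv.trans (finCongr (mul_comm k 2))) with he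
  have heval : ∀ (p : Fin 2) (i : Fin k), ((e (p, i)) : ℕ) = p.val + 2 * i.val := by
    intro p i; simp [he, finProdFinEquiv]
  set B₂ := (B.map φ).submatrix e e with hB₂
  set C₂ := (C.map φ).submatrix e e with hC₂
  set A₂ := (A.map φ).submatrix e e with hA₂
  set D : Fin k → Matrix (Fin 2) (Fin 2) R :=
    fun i => !![4 * (a i : R), 1; 1, 1 + 4 * (b i : R)] with hD
  -- non-dependent description of entries of B
  have hB' : ∀ (p : Fin 2) (i : Fin k) (q : Fin 2) (j : Fin k),
      B (e (p, i)) (e (q, j)) = if i = j then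
        (if p = q then (if (p : ℕ) = 0 then 4 * a i else 1 + 4 * b i) else 1)
        else 0 := by
    intro p i q j
    rw [hB]
    have hdiv : ((e (p, i)) : ℕ) / 2 = (i : ℕ) := by
      have := p.isLt; rw [heval]; omega
    have hdivq : ((e (q, j)) : ℕ) / 2 = (j : ℕ) := by
      have := q.isLt; rw [heval]; omega
    have hmod : ((e (p, i)) : ℕ) % 2 = (p : ℕ) := by
      have := p.isLt; rw [heval]; omega
    by_cases hij : i = j
    · subst hij
      by_cases hpq : p = q
      · subst hpq
        rw [if_pos rfl, if_pos rfl, if_pos rfl]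
        simp only [hmod, hdiv, Fin.eta]
      · rw [if_neg (by intro hcontra; exact hpq (Prod.ext_iff.mp (e.injective hcontra)).1),
          if_pos rfl, if_neg hpq, hdiv, hdivq, if_pos rfl]
    · rw [if_neg (by intro hcontra; exact hij (Prod.ext_iff.mp (e.injective hcontra)).2),
        if_neg hij, hdiv, hdivq, if_neg (fun hc => hij (Fin.ext hc))]
  have hBeq : B₂ = blockDiagonal D := by
    ext ⟨p, i⟩ ⟨q, j⟩
    rw [blockDiagonal_apply]
    simp only [hB₂, Matrix.submatrix_apply, Matrix.map_apply, hB']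
    rw [apply_ite φ]
    by_cases hij : i = j
    · subst hij
      rw [if_pos rfl, if_pos rfl]
      fin_cases p <;> fin_cases q <;> simp [hD, hφ] <;> push_cast <;> ring
    · rw [if_neg hij, if_neg hij, map_zero]
  have hAeq : A₂ = B₂ + (4 : R) • C₂ + (4 : R) • C₂ᵀ := by
    rw [hA₂, hA]
    ext ⟨p, i⟩ ⟨q, j⟩
    simp only [Matrix.submatrix_apply, Matrix.map_apply, Matrix.add_apply, Matrix.smul_apply,
      hB₂, hC₂, Matrix.transpose_apply, smul_eq_mul, hφ, Int.coe_castRingHom]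
    push_cast
    ring
  set P : Matrix (Fin 2 × Fin k) (Fin 2 × Fin k) R :=
    blockDiagonal (fun _ => !![1, 1; 1, 0]) with hP
  have key1 : (4 : R) • (P * B₂) = (4 : R) • (1 : Matrix (Fin 2 × Fin k) (Fin 2 × Fin k) R) := by
    have h16 : (16 : R) = 0 := by decide
    have h8 : (8 : R) = 0 := by decide
    have hfun : ((4 : R) • fun i : Fin k => (!![1,1;1,0] : Matrix (Fin 2) (Fin 2) R) * D i)
        = (4 : R) • (1 : Fin k → Matrix (Fin 2) (Fin 2) R) := by
      funext i
      simp only [Pi.smul_apply, Pi.mul_apply, Pi.one_apply, hD]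
      ext p q
      fin_cases p <;> fin_cases q <;>
        simp [Matrix.mul_apply, Fin.sum_univ_succ, Matrix.one_apply, Matrix.smul_apply,
          smul_eq_mul] <;>
        first
          | rfl
          | linear_combination (a i : R) * h16
          | linear_combination (b i : R) * h16 + h8
    rw [hBeq, hP, ← blockDiagonal_mul, ← blockDiagonal_smul, hfun, blockDiagonal_smul,
      blockDiagonal_one]
  set M : Matrix (Fin 2 × Fin k) (Fin 2 × Fin k) R := C₂ + C₂ᵀ with hM
  set Y : Matrix (Fin 2 × Fin k) (Fin 2 × Fin k) R := M * P with hY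
  have h44 : (4 : R) * 4 = 0 := by decide
  have h44' : (4 : R) + 4 = 0 := by decide
  have hconj : (1 + (4 : R) • Y) * A₂ = B₂ := by
    rw [hAeq, add_mul, one_mul]
    have e1 : ((4:R) • Y) * (B₂ + (4:R) • C₂ + (4:R) • C₂ᵀ)
        = (4:R) • (Y * B₂) + (4:R) • ((4:R) • (Y * C₂)) + (4:R) • ((4:R) • (Y * C₂ᵀ)) := by
      rw [Matrix.smul_mul, Matrix.mul_add, Matrix.mul_add, Matrix.mul_smul, Matrix.mul_smul]
      rw [smul_add, smul_add]
    rw [e1, smul_smul, h44, zero_smul, smul_smul, h44, zero_smul, add_zero, add_zero]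
    have e2 : (4:R) • (Y * B₂) = (4:R) • M := by
      calc (4:R) • (Y * B₂) = (4:R) • (M * (P * B₂)) := by rw [hY, Matrix.mul_assoc]
        _ = M * ((4:R) • (P * B₂)) := by rw [Matrix.mul_smul]
        _ = M * ((4:R) • 1) := by rw [key1]
        _ = (4:R) • (M * 1) := by rw [Matrix.mul_smul]
        _ = (4:R) • M := by rw [Matrix.mul_one]
    rw [e2]
    have hz : ∀ X : Matrix (Fin 2 × Fin k) (Fin 2 × Fin k) R, (4:R) • X + (4:R) • X = 0 := by
      intro X; rw [← add_smul, h44', zero_smul]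
    rw [hM, smul_add]
    calc B₂ + (4:R) • C₂ + (4:R) • C₂ᵀ + ((4:R) • C₂ + (4:R) • C₂ᵀ)
        = B₂ + (((4:R) • C₂ + (4:R) • C₂) + ((4:R) • C₂ᵀ + (4:R) • C₂ᵀ)) := by
          abel
      _ = B₂ := by rw [hz, hz, add_zero, add_zero]
  have hdet1 : (1 + (4 : R) • Y).det = 1 := by
    rw [Matrix.det_one_add_smul]
    have h42 : (4 : R) ^ 2 = 0 := by decide
    rw [h42, mul_zero, add_zero]
    have hPt : Pᵀ = P := by
      rw [hP, blockDiagonal_transpose]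
      exact congrArg blockDiagonal (funext fun i => by decide)
    have htr : Y.trace = 2 * (C₂ * P).trace := by
      rw [hY, hM, Matrix.add_mul, Matrix.trace_add]
      have : (C₂ᵀ * P).trace = (C₂ * P).trace := by
        rw [← Matrix.trace_transpose (C₂ᵀ * P), Matrix.transpose_mul, Matrix.transpose_transpose,
          hPt, Matrix.trace_mul_comm]
      rw [this]; ring
    rw [htr]
    have h8 : (8 : R) = 0 := by decide
    have : 2 * (C₂ * P).trace * 4 = 8 * (C₂ * P).trace := by ring
    rw [this, h8, zero_mul, add_zero]
  have hdetA : A₂.det = ∏ i, (4 * (a i : R) - 1) := by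
    have hd := congrArg Matrix.det hconj
    rw [Matrix.det_mul, hdet1, one_mul] at hd
    rw [hd, hBeq, det_blockDiagonal]
    refine Finset.prod_congr rfl fun i _ => ?_
    rw [hD]
    rw [Matrix.det_fin_two_of]
    have h16 : (16 : R) = 0 := by decide
    linear_combination ((a i : R) * (b i : R)) * h16
  have hΔval : (Δ : R) = (-1) ^ k * (1 - 4 * ((∑ i, a i : ℤ) : R)) := by
    have h0 : (Δ : R) = ((A.det : ℤ) : R) := (ZMod.intCast_eq_intCast_iff _ _ _).mpr hΔ
    have h1 : ((A.det : ℤ) : R) = (A.map φ).det := RingHom.map_det φ A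
    have h2 : (A.map φ).det = A₂.det := (Matrix.det_submatrix_equiv_self e (A.map φ)).symm
    rw [h0, h1, h2, hdetA]
    have hp := prod48 (Finset.univ : Finset (Fin k)) (fun i => (a i : R))
    rw [hp, Finset.card_univ, Fintype.card_fin]
    rw [Int.cast_sum]
  constructor
  · intro hev
    obtain ⟨m, hm⟩ := hev
    have hsum : ((∑ i, a i : ℤ) : R) = 2 * (m : R) := by rw [hm]; push_cast; ring
    have h8 : (8 : R) = 0 := by decide
    have hval : (Δ : R) = (-1) ^ k := by
      rw [hΔval, hsum]
      have h42 : 4 * (2 * (m : R)) = 8 * m := by ring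
      rw [h42, h8, zero_mul, sub_zero, mul_one]
    rcases Nat.even_or_odd k with hk | hk
    · left
      refine (ZMod.intCast_eq_intCast_iff _ _ _).mp ?_
      rw [hval, hk.neg_one_pow]; norm_num
    · right
      refine (ZMod.intCast_eq_intCast_iff _ _ _).mp ?_
      rw [hval, hk.neg_one_pow]; norm_num
  · intro hodd
    obtain ⟨m, hm⟩ := hodd
    have hsum : ((∑ i, a i : ℤ) : R) = 2 * (m : R) + 1 := by rw [hm, Int.cast_add, Int.cast_mul]; push_cast; ring
    have h8 : (8 : R) = 0 := by decide
    have hval : (Δ : R) = (-1) ^ k * (-3) := by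
      rw [hΔval, hsum]
      have h42 : (1 : R) - 4 * (2 * (m : R) + 1) = -3 + 8 * (-m) := by ring
      rw [h42, h8, zero_mul, add_zero]
    rcases Nat.even_or_odd k with hk | hk
    · right
      refine (ZMod.intCast_eq_intCast_iff _ _ _).mp ?_
      rw [hval, hk.neg_one_pow]; norm_num
    · left
      refine (ZMod.intCast_eq_intCast_iff _ _ _).mp ?_
      rw [hval, hk.neg_one_pow]; norm_num
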